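/- Let u ∈ F be fixed and for m with lh(v_m) ≥ 4·lh(u) define c_m = Z(v_m)/(⌊lh(v_m)/lh(u)⌋ − 1), where (v_m) is a generating sequence. Then the sequence (c_m) is nonincreasing. -/

import Mathlib

open Filter Topology
open scoped ENNReal Classical

abbrev Word := List Bool

/-- Number of 1s (`true`) in a word. -/
def Yc (w : Word) : ℕ := w.count true
/-- Number of 0s (`false`) in a word. -/
def Zc (w : Word) : ℕ := w.count false
/-- Length of a word. -/
def lh (w : Word) : ℕ := w.length
/-- The ratio ρ_w = Y(w)/Z(w). -/
noncomputable def rho (w : Word) : ℝ := (Yc w : ℝ) / (Zc w : ℝ)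
/-- The ratio ρ_w as an extended nonnegative real. -/
noncomputable def rhoE (w : Word) : ℝ≥0∞ := (Yc w : ℝ≥0∞) / (Zc w : ℝ≥0∞)

/-- w is a finite binary word starting and ending with 0. -/
def inF (w : Word) : Prop := w.head? = some false ∧ w.getLast? = some false

/-- The word v 1^{a_1} v ⋯ v 1^{a_{q-1}} v, where a = [a_1, …, a_{q-1}]. -/
def buildW (v : Word) (a : List ℕ) : Word :=
  v ++ (a.map fun t => List.replicate t true ++ v).flatten

/-- u is built from v. -/
def BuiltFrom (u v : Word) : Prop := ∃ a : List ℕ, a ≠ [] ∧ u = buildW v a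

/-- u is built simply from v. -/
def BuiltSimplyFrom (u v : Word) : Prop :=
  ∃ a : List ℕ, a ≠ [] ∧ (∀ x ∈ a, ∀ y ∈ a, x = y) ∧ u = buildW v a

/-- The infinite word V extends the finite word w (w is a prefix of V). -/
def Extends (V : ℕ → Bool) (w : Word) : Prop :=
  ∀ (i : ℕ) (h : i < w.length), w.get ⟨i, h⟩ = V i

/-- The infinite word V is built from the finite word v. -/
def InfBuiltFrom (V : ℕ → Bool) (v : Word) : Prop :=
  ∃ a : ℕ → ℕ, ∀ n : ℕ, Extends V (buildW v (List.ofFn fun i : Fin n => a i))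

/-- A generating sequence: v_0 = 0 and each v_{n+1} is built from v_n. -/
def GenSeq (v : ℕ → Word) : Prop :=
  v 0 = [false] ∧ ∀ n, BuiltFrom (v (n + 1)) (v n)

/-- A generating sequence for the infinite word V. -/
def GenSeqFor (V : ℕ → Bool) (v : ℕ → Word) : Prop :=
  GenSeq v ∧ ∀ n, InfBuiltFrom V (v n)

/-- V is aperiodic. -/
def Aperiodic (V : ℕ → Bool) : Prop := ¬ ∃ p > 0, ∀ i, V (i + p) = V i

/-- V is a nondegenerate infinite rank one word (element of R). -/
def RankOneWord (V : ℕ → Bool) : Prop := (∃ v, GenSeqFor V v) ∧ Aperiodic V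

/-- v is an element of the canonical generating sequence of V. -/
def CanonicalElt (V : ℕ → Bool) (v : Word) : Prop :=
  InfBuiltFrom V v ∧
    ¬ ∃ u w : Word, inF u ∧ inF w ∧ lh u < lh v ∧ lh v < lh w ∧
      InfBuiltFrom V u ∧ InfBuiltFrom V w ∧
      BuiltFrom w u ∧ BuiltFrom u v ∧ BuiltSimplyFrom w u

/-- (v_n) is the canonical generating sequence of V. -/
def CanonicalGenSeq (V : ℕ → Bool) (v : ℕ → Word) : Prop :=
  GenSeqFor V v ∧ (∀ n, CanonicalElt V (v n)) ∧
    ∀ w : Word, CanonicalElt V w → ∃ n, v n = w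

/-- The canonical generating sequence of V (via choice). -/
noncomputable def canonSeq (V : ℕ → Bool) : ℕ → Word :=
  if h : ∃ v, CanonicalGenSeq V v then h.choose else fun _ => []

/-- ρ_{V,n}, the ratio of the n-th canonical generating word of V. -/
noncomputable def rhoSeq (V : ℕ → Bool) (n : ℕ) : ℝ := rho (canonSeq V n)

/-- ρ_V = lim_n ρ_{V,n} ∈ [0,∞]. -/
noncomputable def rhoV (V : ℕ → Bool) : ℝ≥0∞ := ⨆ n, rhoE (canonSeq V n)

/-- The set O(N,r). -/
def Oset (N : ℕ) (r : ℚ) : Set (ℕ → Bool) :=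
  {V | RankOneWord V ∧ ∀ m n : ℕ, N ≤ m → N ≤ n → |rhoSeq V m - rhoSeq V n| ≤ (r : ℝ)}

/-- R* = {V ∈ R : ρ_V < ∞}. -/
def Rstar : Set (ℕ → Bool) := {V | RankOneWord V ∧ rhoV V < ⊤}

/-- Lengths of common elements of the canonical generating sequences of V and W. -/
def commonLens (V W : ℕ → Bool) : Set ℕ :=
  {n | ∃ w : Word, lh w = n ∧ CanonicalElt V w ∧ CanonicalElt W w}

/-- The ultrametric d on R. -/
noncomputable def dR (V W : ℕ → Bool) : ℝ :=
  if V = W then 0 else (2 : ℝ) ^ (-((sSup (commonLens V W) : ℕ) : ℤ))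

/-- L(α,β) = (total number of spacers)/lh(α), when α is built from β;
here the total spacer count is Y(α) − q·Y(β) with q = Z(α)/Z(β). -/
noncomputable def Lfin (α β : Word) : ℝ :=
  ((Yc α : ℝ) - ((Zc α : ℝ) / (Zc β : ℝ)) * (Yc β : ℝ)) / (lh α : ℝ)

/-- The metric topology τ_d on R, generated by the d-balls. -/
def tauD : TopologicalSpace {V : ℕ → Bool // RankOneWord V} :=
  TopologicalSpace.generateFrom
    {s | ∃ (V : {V : ℕ → Bool // RankOneWord V}) (ε : ℝ), 0 < ε ∧
      s = {W : {V : ℕ → Bool // RankOneWord V} | dR V.1 W.1 < ε}}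

/-- The topology τ* on R*, generated by the d-balls together with the sets O(N,r). -/
def tauStar : TopologicalSpace ↥Rstar :=
  TopologicalSpace.generateFrom
    ({s | ∃ (V : ↥Rstar) (ε : ℝ), 0 < ε ∧ s = {W : ↥Rstar | dR V.1 W.1 < ε}} ∪
     {s | ∃ (N : ℕ) (r : ℚ), 0 < r ∧ s = {W : ↥Rstar | W.1 ∈ Oset N r}})


lemma Zc_buildW (v : Word) (a : List ℕ) :
    Zc (buildW v a) = (a.length + 1) * Zc v := by
  induction a with
  | nil => simp [Zc, buildW]
  | cons t a ih =>
    simp [Zc, buildW, List.count_append, List.count_replicate, List.flatten] at ih ⊢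
    ring_nf at ih ⊢
    omega

lemma lh_buildW (v : Word) (a : List ℕ) :
    (a.length + 1) * lh v ≤ lh (buildW v a) := by
  induction a with
  | nil => simp [lh, buildW]
  | cons t a ih =>
    simp [lh, buildW, List.flatten] at ih ⊢
    nlinarith [t.zero_le]

lemma Zc_pos (w : Word) (h : inF w) : 0 < Zc w := by
  obtain ⟨h1, _⟩ := h
  cases w with
  | nil => simp at h1
  | cons b l =>
    simp at h1
    simp [Zc, h1, List.count_cons]

theorem stmt11 (u : Word) (hu : inF u) (v : ℕ → Word) (hF : ∀ m, inF (v m))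
    (hchain : ∀ m, BuiltFrom (v (m + 1)) (v m)) :
    ∀ m, 4 * lh u ≤ lh (v m) →
      (Zc (v (m + 1)) : ℝ) / ((lh (v (m + 1)) / lh u - 1 : ℕ) : ℝ)
        ≤ (Zc (v m) : ℝ) / ((lh (v m) / lh u - 1 : ℕ) : ℝ) := by
  intro m hm
  obtain ⟨a, ha, hbuild⟩ := hchain m
  have hL : 0 < lh u := by
    obtain ⟨h1, _⟩ := hu
    cases u with
    | nil => simp at h1
    | cons b l => simp [lh]
  have hZ : 0 < Zc (v m) := Zc_pos _ (hF m)
  set L := lh u with hLdef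
  set n := lh (v m) with hndef
  set q := a.length + 1 with hqdef
  have hq : 2 ≤ q := by
    have := List.length_pos_iff.mpr ha; omega
  have hZ' : Zc (v (m+1)) = q * Zc (v m) := by rw [hbuild]; exact Zc_buildW _ _
  have hlen : q * n ≤ lh (v (m+1)) := by rw [hbuild]; exact lh_buildW _ _
  set n' := lh (v (m+1)) with hn'def
  have hd : 4 ≤ n / L := by
    rw [Nat.le_div_iff_mul_le hL]; omega
  set k := n / L with hkdef
  have h1 : q * k ≤ (q * n) / L := by
    rw [Nat.le_div_iff_mul_le hL]
    calc q * k * L = q * (k * L) := by ring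
      _ ≤ q * n := Nat.mul_le_mul_left _ (Nat.div_mul_le_self _ _)
  have h2 : (q * n) / L ≤ n' / L := Nat.div_le_div_right hlen
  have hsplit : q * (k - 1) + q = q * k := by
    have : k - 1 + 1 = k := by omega
    calc q * (k - 1) + q = q * ((k - 1) + 1) := by ring
      _ = q * k := by rw [this]
  have key : q * (k - 1) ≤ n' / L - 1 := by omega
  have hd3 : 0 < k - 1 := by omega
  have hpos : 0 < q * (k - 1) := Nat.mul_pos (by omega) hd3
  have hd' : 0 < n' / L - 1 := by omega
  rw [hZ', div_le_div_iff₀ (by exact_mod_cast hd') (by exact_mod_cast hd3)]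
  have natineq : q * Zc (v m) * (k - 1) ≤ Zc (v m) * (n' / L - 1) := by
    calc q * Zc (v m) * (k - 1) = Zc (v m) * (q * (k - 1)) := by ring
      _ ≤ Zc (v m) * (n' / L - 1) := Nat.mul_le_mul_left _ key
  exact_mod_cast natineq
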